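/- Let B be a bialgebra over a field k of characteristic zero, A a left B-module algebra (i.e., a unital associative algebra with B-linear multiplication and with b·1_A = ε(b)1_A), and F ∈ B ⊗ B a twisting element, meaning [(Δ⊗id)(F)](F⊗1) = [(id⊗Δ)(F)](1⊗F) and (ε⊗id)(F) = 1 = (id⊗ε)(F). Then the operation a * b := μ_A(F(a⊗b)), where F acts on A⊗A via the B⊗B-module structure, defines an associative unital multiplication on A with the same unit 1_A. -/

import Mathlib

open TensorProduct Coalgebra

section Prelude

variable (R : Type*) [CommRing R]
variable (B : Type*) [Ring B] [Bialgebra R B]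
variable (A : Type*) [Ring A] [Algebra R A]

/-- The action of `B ⊗ B` on `A ⊗ A` induced by a representation `ρ : B → End A`. -/
noncomputable def act2 (ρ : B →ₐ[R] Module.End R A) :
    B ⊗[R] B →ₗ[R] (A ⊗[R] A) →ₗ[R] A ⊗[R] A :=
  TensorProduct.homTensorHomMap (RingHom.id R) A A A A ∘ₗ TensorProduct.map ρ.toLinearMap ρ.toLinearMap

/-- `A` is a left `B`-module algebra via `ρ`: the multiplication of `A` is `B`-linear
(with respect to the diagonal action on `A ⊗ A`), and `b • 1 = ε(b) • 1`. -/
def IsModuleAlgebra (ρ : B →ₐ[R] Module.End R A) : Prop :=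
  (∀ b : B, (ρ b) ∘ₗ LinearMap.mul' R A =
      LinearMap.mul' R A ∘ₗ act2 R B A ρ (Coalgebra.comul b)) ∧
  (∀ b : B, ρ b 1 = Coalgebra.counit (R := R) b • (1 : A))

/-- `F ∈ B ⊗ B` is a twisting element: `[(Δ⊗id)F](F⊗1) = [(id⊗Δ)F](1⊗F)` and
`(ε⊗id)F = 1 = (id⊗ε)F`. -/
def IsTwisting (F : B ⊗[R] B) : Prop :=
  (TensorProduct.map Coalgebra.comul LinearMap.id F) * (F ⊗ₜ[R] (1 : B)) =
    (TensorProduct.assoc R B B B).symm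
      ((TensorProduct.map LinearMap.id Coalgebra.comul F) * ((1 : B) ⊗ₜ[R] F)) ∧
  TensorProduct.lid R B (TensorProduct.map Coalgebra.counit LinearMap.id F) = 1 ∧
  TensorProduct.rid R B (TensorProduct.map LinearMap.id Coalgebra.counit F) = 1

/-- The multiplication twisted by `F`: `a * b := μ_A (F (a ⊗ b))`. -/
noncomputable def twMul (ρ : B →ₐ[R] Module.End R A) (F : B ⊗[R] B) (a b : A) : A :=
  LinearMap.mul' R A (act2 R B A ρ F (a ⊗ₜ[R] b))

end Prelude


section MyAux

variable (R : Type*) [CommRing R]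
variable (B : Type*) [Ring B] [Bialgebra R B]
variable (A : Type*) [Ring A] [Algebra R A]

/-- `ρ ⊗ ρ : B ⊗ B →ₐ End (A ⊗ A)` as an algebra hom. -/
noncomputable def rho2 (ρ : B →ₐ[R] Module.End R A) :
    B ⊗[R] B →ₐ[R] Module.End R (A ⊗[R] A) :=
  (Module.endTensorEndAlgHom (R := R) (S := R) (A := R) (M := A) (N := A)).comp
    (Algebra.TensorProduct.map ρ ρ)

lemma rho2_tmul (ρ : B →ₐ[R] Module.End R A) (b b' : B) :
    rho2 R B A ρ (b ⊗ₜ b') = TensorProduct.map (ρ b) (ρ b') := rfl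

variable (ρ : B →ₐ[R] Module.End R A)

/-- the threefold action on `(A ⊗ A) ⊗ A`. -/
noncomputable def rho3L :
    (B ⊗[R] B) ⊗[R] B →ₐ[R] Module.End R ((A ⊗[R] A) ⊗[R] A) :=
  (Module.endTensorEndAlgHom (R := R) (S := R) (A := R)).comp
    (Algebra.TensorProduct.map (rho2 R B A ρ) ρ)

/-- the threefold action on `A ⊗ (A ⊗ A)`. -/
noncomputable def rho3R :
    B ⊗[R] (B ⊗[R] B) →ₐ[R] Module.End R (A ⊗[R] (A ⊗[R] A)) :=
  (Module.endTensorEndAlgHom (R := R) (S := R) (A := R)).comp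
    (Algebra.TensorProduct.map ρ (rho2 R B A ρ))

lemma rho3L_tmul (y : B ⊗[R] B) (b : B) :
    rho3L R B A ρ (y ⊗ₜ b) = TensorProduct.map (rho2 R B A ρ y) (ρ b) := rfl

lemma rho3R_tmul (b : B) (y : B ⊗[R] B) :
    rho3R R B A ρ (b ⊗ₜ y) = TensorProduct.map (ρ b) (rho2 R B A ρ y) := rfl

lemma act2_eq (x : B ⊗[R] B) : act2 R B A ρ x = rho2 R B A ρ x := by
  induction x using TensorProduct.induction_on with
  | zero => simp [map_zero]
  | tmul b b' => rw [rho2_tmul]; simp [act2, TensorProduct.homTensorHomMap_apply]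
  | add x y hx hy => simp [map_add, hx, hy]

lemma muCompat (hρ : IsModuleAlgebra R B A ρ) (b : B) :
    (ρ b) ∘ₗ LinearMap.mul' R A =
      LinearMap.mul' R A ∘ₗ rho2 R B A ρ (Coalgebra.comul b) := by
  rw [← act2_eq]; exact hρ.1 b

lemma L1 (hρ : IsModuleAlgebra R B A ρ) (w : B ⊗[R] B) :
    TensorProduct.map (LinearMap.mul' R A) LinearMap.id ∘ₗ
        rho3L R B A ρ (TensorProduct.map Coalgebra.comul LinearMap.id w) =
      (rho2 R B A ρ w) ∘ₗ TensorProduct.map (LinearMap.mul' R A) LinearMap.id := by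
  induction w using TensorProduct.induction_on with
  | zero => simp [map_zero]
  | tmul b b' =>
      rw [TensorProduct.map_tmul, rho3L_tmul, rho2_tmul]
      simp only [LinearMap.id_coe, id_eq]
      rw [← TensorProduct.map_comp, ← TensorProduct.map_comp,
        muCompat R B A ρ hρ b]
      simp
  | add x y hx hy =>
      simp only [map_add, LinearMap.comp_add, LinearMap.add_comp, hx, hy]

lemma L1' (hρ : IsModuleAlgebra R B A ρ) (w : B ⊗[R] B) :
    TensorProduct.map LinearMap.id (LinearMap.mul' R A) ∘ₗ
        rho3R R B A ρ (TensorProduct.map LinearMap.id Coalgebra.comul w) =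
      (rho2 R B A ρ w) ∘ₗ TensorProduct.map LinearMap.id (LinearMap.mul' R A) := by
  induction w using TensorProduct.induction_on with
  | zero => simp [map_zero]
  | tmul b b' =>
      rw [TensorProduct.map_tmul, rho3R_tmul, rho2_tmul]
      simp only [LinearMap.id_coe, id_eq]
      rw [← TensorProduct.map_comp, ← TensorProduct.map_comp,
        muCompat R B A ρ hρ b']
      simp
  | add x y hx hy =>
      simp only [map_add, LinearMap.comp_add, LinearMap.add_comp, hx, hy]

lemma L2 :
    LinearMap.mul' R A ∘ₗ TensorProduct.map (LinearMap.mul' R A) LinearMap.id =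
      LinearMap.mul' R A ∘ₗ TensorProduct.map LinearMap.id (LinearMap.mul' R A) ∘ₗ
        (TensorProduct.assoc R A A A).toLinearMap := by
  apply TensorProduct.ext_threefold
  intro a b c
  simp [LinearMap.mul'_apply, mul_assoc]

lemma L3 (u : B ⊗[R] (B ⊗[R] B)) :
    (TensorProduct.assoc R A A A).toLinearMap ∘ₗ
        rho3L R B A ρ ((TensorProduct.assoc R B B B).symm u) =
      rho3R R B A ρ u ∘ₗ (TensorProduct.assoc R A A A).toLinearMap := by
  induction u using TensorProduct.induction_on with
  | zero =>
      rw [(TensorProduct.assoc R B B B).symm.map_zero, map_zero, map_zero,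
        LinearMap.comp_zero, LinearMap.zero_comp]
  | tmul b y =>
      induction y using TensorProduct.induction_on with
      | zero =>
          rw [TensorProduct.tmul_zero, (TensorProduct.assoc R B B B).symm.map_zero,
            map_zero, map_zero, LinearMap.comp_zero, LinearMap.zero_comp]
      | tmul b' b'' =>
          rw [show (TensorProduct.assoc R B B B).symm (b ⊗ₜ (b' ⊗ₜ b'')) =
            (b ⊗ₜ b') ⊗ₜ b'' from rfl, rho3L_tmul, rho3R_tmul, rho2_tmul, rho2_tmul]
          exact (TensorProduct.map_map_comp_assoc_eq (ρ b) (ρ b') (ρ b'')).symm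
      | add x y hx hy =>
          simp only [TensorProduct.tmul_add, map_add, LinearMap.comp_add,
            LinearMap.add_comp, hx, hy]
  | add x y hx hy =>
      simp only [map_add, LinearMap.comp_add, LinearMap.add_comp, hx, hy]

lemma assocSide (_hρ : IsModuleAlgebra R B A ρ) (w : B ⊗[R] (B ⊗[R] B)) :
    LinearMap.mul' R A ∘ₗ TensorProduct.map (LinearMap.mul' R A) LinearMap.id ∘ₗ
        rho3L R B A ρ ((TensorProduct.assoc R B B B).symm w) =
      LinearMap.mul' R A ∘ₗ TensorProduct.map LinearMap.id (LinearMap.mul' R A) ∘ₗ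
        rho3R R B A ρ w ∘ₗ (TensorProduct.assoc R A A A).toLinearMap := by
  rw [← LinearMap.comp_assoc, L2 R A, LinearMap.comp_assoc, LinearMap.comp_assoc,
    L3 R B A ρ w]

lemma unitL (hρ : IsModuleAlgebra R B A ρ) (x : B ⊗[R] B) (a : A) :
    LinearMap.mul' R A (rho2 R B A ρ x ((1 : A) ⊗ₜ a)) =
      ρ (TensorProduct.lid R B (TensorProduct.map Coalgebra.counit LinearMap.id x)) a := by
  induction x using TensorProduct.induction_on with
  | zero => simp [map_zero]
  | tmul b b' =>
      rw [rho2_tmul, TensorProduct.map_tmul, LinearMap.mul'_apply, hρ.2 b]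
      simp [TensorProduct.lid_tmul, smul_mul_assoc]
  | add x y hx hy => simp only [map_add, LinearMap.add_apply, hx, hy]

lemma unitR (hρ : IsModuleAlgebra R B A ρ) (x : B ⊗[R] B) (a : A) :
    LinearMap.mul' R A (rho2 R B A ρ x (a ⊗ₜ (1 : A))) =
      ρ (TensorProduct.rid R B (TensorProduct.map LinearMap.id Coalgebra.counit x)) a := by
  induction x using TensorProduct.induction_on with
  | zero => simp [map_zero]
  | tmul b b' =>
      rw [rho2_tmul, TensorProduct.map_tmul, LinearMap.mul'_apply, hρ.2 b']
      simp [TensorProduct.rid_tmul, mul_smul_comm]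
  | add x y hx hy => simp only [map_add, LinearMap.add_apply, hx, hy]

end MyAux

/-- If `A` is a left `B`-module algebra over a bialgebra `B`
(over a field `k` of characteristic zero) and `F ∈ B ⊗ B` is a twisting element, then
`a * b := μ_A (F (a ⊗ b))` is an associative unital multiplication on `A`
with the same unit `1_A`. -/
theorem twisted_mul_assoc_unital
    (k : Type*) [Field k] [CharZero k]
    (B : Type*) [Ring B] [Bialgebra k B]
    (A : Type*) [Ring A] [Algebra k A]
    (ρ : B →ₐ[k] Module.End k A) (hρ : IsModuleAlgebra k B A ρ)
    (F : B ⊗[k] B) (hF : IsTwisting k B F) :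
    (∀ a b c : A, twMul k B A ρ F (twMul k B A ρ F a b) c
        = twMul k B A ρ F a (twMul k B A ρ F b c)) ∧
    (∀ a : A, twMul k B A ρ F 1 a = a ∧ twMul k B A ρ F a 1 = a) := by
  constructor
  · intro a b c
    have h1 : twMul k B A ρ F (twMul k B A ρ F a b) c =
        LinearMap.mul' k A (TensorProduct.map (LinearMap.mul' k A) LinearMap.id
          (rho3L k B A ρ ((TensorProduct.map Coalgebra.comul LinearMap.id F) *
            (F ⊗ₜ[k] (1 : B))) ((a ⊗ₜ b) ⊗ₜ c))) := by
      have hF1 : rho3L k B A ρ (F ⊗ₜ[k] (1 : B)) =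
          TensorProduct.map (rho2 k B A ρ F) LinearMap.id := by
        rw [rho3L_tmul, map_one]; rfl
      rw [map_mul, Module.End.mul_apply, hF1]
      have key := LinearMap.congr_fun (L1 k B A ρ hρ F)
        (TensorProduct.map (rho2 k B A ρ F) LinearMap.id ((a ⊗ₜ b) ⊗ₜ c))
      simp only [LinearMap.comp_apply] at key
      rw [key]
      simp only [twMul, act2_eq, TensorProduct.map_tmul, LinearMap.id_coe, id_eq]
    have h2 : twMul k B A ρ F a (twMul k B A ρ F b c) =
        LinearMap.mul' k A (TensorProduct.map LinearMap.id (LinearMap.mul' k A)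
          (rho3R k B A ρ ((TensorProduct.map LinearMap.id Coalgebra.comul F) *
            ((1 : B) ⊗ₜ[k] F)) (a ⊗ₜ (b ⊗ₜ c)))) := by
      have hF1 : rho3R k B A ρ ((1 : B) ⊗ₜ[k] F) =
          TensorProduct.map LinearMap.id (rho2 k B A ρ F) := by
        rw [rho3R_tmul, map_one]; rfl
      rw [map_mul, Module.End.mul_apply, hF1]
      have key := LinearMap.congr_fun (L1' k B A ρ hρ F)
        (TensorProduct.map LinearMap.id (rho2 k B A ρ F) (a ⊗ₜ (b ⊗ₜ c)))
      simp only [LinearMap.comp_apply] at key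
      rw [key]
      simp only [twMul, act2_eq, TensorProduct.map_tmul, LinearMap.id_coe, id_eq]
    rw [h1, h2, hF.1]
    have main := LinearMap.congr_fun (assocSide k B A ρ hρ
      ((TensorProduct.map LinearMap.id Coalgebra.comul F) * ((1 : B) ⊗ₜ[k] F)))
      ((a ⊗ₜ b) ⊗ₜ c)
    simp only [LinearMap.comp_apply] at main
    rw [main]
    rfl
  · intro a
    refine ⟨?_, ?_⟩
    · rw [twMul, act2_eq, unitL k B A ρ hρ F a, hF.2.1, map_one]
      rfl
    · rw [twMul, act2_eq, unitR k B A ρ hρ F a, hF.2.2, map_one]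
      rfl
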